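/- For fixed probability densities p, q with suitable integrability, lim_{γ→0} (1/γ)·(C_γ(q,p) + 1) = −∫ q(x) log p(x) dx, the ordinary cross-entropy; consequently lim_{γ→0} D_γ(q‖p) = D_KL(q‖p). -/

import Mathlib

open MeasureTheory Filter


/-- `|e^u - 1| ≤ |u| e^{|u|}`. -/
lemma aux_abs_exp_sub_one (u : ℝ) : |Real.exp u - 1| ≤ |u| * Real.exp |u| := by
  rcases le_or_gt 0 u with h | h
  · rw [abs_of_nonneg h, abs_of_nonneg (by linarith [Real.one_le_exp h])]
    have h1 : -u + 1 ≤ Real.exp (-u) := Real.add_one_le_exp (-u)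
    have h2 : Real.exp (-u) * Real.exp u = 1 := by
      rw [← Real.exp_add]; simp
    nlinarith [Real.exp_pos u]
  · rw [abs_of_neg h, abs_of_nonpos (by have := Real.exp_lt_exp.mpr h; simp only [Real.exp_zero] at this; linarith)]
    have h1 : u + 1 ≤ Real.exp u := Real.add_one_le_exp u
    have h2 : 1 ≤ Real.exp (-u) := Real.one_le_exp (by linarith)
    nlinarith

/-- If `h → 0`, `h γ / γ → L` and `φ` is differentiable at `0` with `φ 0 = 0`,
then `φ (h γ) / γ → φ'(0) · L`. -/
lemma aux_lemB {l : Filter ℝ} {h φ : ℝ → ℝ} {m L : ℝ}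
    (hφ : HasDerivAt φ m 0) (hφ0 : φ 0 = 0)
    (hh : Tendsto h l (nhds 0))
    (hhg : Tendsto (fun γ => h γ / γ) l (nhds L)) :
    Tendsto (fun γ => φ (h γ) / γ) l (nhds (m * L)) := by
  have hlo : (fun t => φ t - φ 0 - (t - 0) * m) =o[nhds 0] fun t => t - 0 :=
    hasDerivAt_iff_isLittleO.mp hφ
  simp only [hφ0, sub_zero] at hlo
  have hlo2 : (fun γ => φ (h γ) - h γ * m) =o[l] fun γ => h γ := hlo.comp_tendsto hh
  have hlo3 : (fun γ => (φ (h γ) - h γ * m) * (1 / γ)) =o[l] fun γ => h γ * (1 / γ) :=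
    hlo2.mul_isBigO (Asymptotics.isBigO_refl _ _)
  have hbig : (fun γ => h γ * (1 / γ)) =O[l] (fun _ => (1 : ℝ)) := by
    have : Tendsto (fun γ => h γ * (1 / γ)) l (nhds L) := by
      simpa [div_eq_mul_inv] using hhg
    exact this.isBigO_one ℝ
  have h0 : Tendsto (fun γ => (φ (h γ) - h γ * m) * (1 / γ)) l (nhds 0) :=
    Asymptotics.isLittleO_one_iff ℝ |>.mp (hlo3.trans_isBigO hbig)
  have : Tendsto (fun γ => (φ (h γ) - h γ * m) * (1 / γ) + m * (h γ / γ)) l (nhds (0 + m * L)) :=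
    h0.add (hhg.const_mul m)
  rw [zero_add] at this
  refine this.congr fun γ => ?_
  rcases eq_or_ne γ 0 with rfl | hγ
  · simp
  · field_simp
    ring

/-- Core dominated-convergence lemma: `(∫ q gᵞ − ∫ q)/γ → ∫ q log g`, plus integrability. -/
lemma aux_A {α : Type*} [MeasurableSpace α] {μ : Measure α}
    {q g : α → ℝ} {c M : ℝ}
    (hqm : Measurable q) (hgm : Measurable g)
    (hq0 : ∀ x, 0 ≤ q x)
    (hc : 0 < c) (hcM : ∀ x, q x ≠ 0 → c ≤ g x ∧ g x ≤ M)
    (hq : Integrable q μ)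
    (hgl : Integrable (fun x => q x * Real.log (g x)) μ) :
    Tendsto (fun γ : ℝ => ((∫ x, q x * g x ^ γ ∂μ) - ∫ x, q x ∂μ) / γ)
      (nhdsWithin 0 {0}ᶜ) (nhds (∫ x, q x * Real.log (g x) ∂μ)) ∧
    ∀ γ : ℝ, |γ| ≤ 1 → Integrable (fun x => q x * g x ^ γ) μ := by
  set K : ℝ := Real.exp (max |Real.log c| |Real.log M|) with hK
  have hcM' : ∀ x, q x ≠ 0 → 0 < g x := fun x hx => lt_of_lt_of_le hc (hcM x hx).1
  have hlogb : ∀ x, q x ≠ 0 → |Real.log (g x)| ≤ max |Real.log c| |Real.log M| := by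
    intro x hx
    obtain ⟨h1, h2⟩ := hcM x hx
    rw [abs_le]
    constructor
    · calc -(max |Real.log c| |Real.log M|) ≤ -|Real.log c| := by
            simp [le_max_left]
        _ ≤ Real.log c := neg_abs_le _
        _ ≤ Real.log (g x) := Real.log_le_log hc h1
    · calc Real.log (g x) ≤ Real.log M := Real.log_le_log (hcM' x hx) h2
        _ ≤ |Real.log M| := le_abs_self _
        _ ≤ _ := le_max_right _ _
  have hKbound : ∀ (γ : ℝ), |γ| ≤ 1 → ∀ x, q x ≠ 0 → g x ^ γ ≤ K := by
    intro γ hγ x hx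
    rw [Real.rpow_def_of_pos (hcM' x hx)]
    apply Real.exp_le_exp.mpr
    calc Real.log (g x) * γ ≤ |Real.log (g x) * γ| := le_abs_self _
      _ = |Real.log (g x)| * |γ| := abs_mul _ _
      _ ≤ max |Real.log c| |Real.log M| * 1 :=
          mul_le_mul (hlogb x hx) hγ (abs_nonneg _) (le_trans (abs_nonneg _) (hlogb x hx))
      _ = _ := mul_one _
  have hK0 : 0 < K := Real.exp_pos _
  have hint : ∀ γ : ℝ, |γ| ≤ 1 → Integrable (fun x => q x * g x ^ γ) μ := by
    intro γ hγ
    have hmeas : Measurable fun x => q x * g x ^ γ := hqm.mul (hgm.pow measurable_const)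
    refine ((hq.const_mul K).mono hmeas.aestronglyMeasurable (ae_of_all _ fun x => ?_))
    rcases eq_or_ne (q x) 0 with h0 | h0
    · simp [h0]
    · have hg0 : 0 < g x := hcM' x h0
      have : ‖q x * g x ^ γ‖ = q x * g x ^ γ := by
        rw [Real.norm_eq_abs, abs_of_nonneg (mul_nonneg (hq0 x) (Real.rpow_nonneg hg0.le _))]
      rw [this, Real.norm_eq_abs, abs_of_nonneg (mul_nonneg (le_of_lt hK0) (hq0 x))]
      exact mul_le_mul_of_nonneg_left (hKbound γ hγ x h0) (hq0 x) |>.trans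
        (le_of_eq (mul_comm _ _))
  refine ⟨?_, hint⟩
  have hdct : Tendsto (fun γ : ℝ => ∫ x, q x * ((g x ^ γ - 1) / γ) ∂μ)
      (nhdsWithin 0 {0}ᶜ) (nhds (∫ x, q x * Real.log (g x) ∂μ)) := by
    apply tendsto_integral_filter_of_dominated_convergence
      (fun x => K * |q x * Real.log (g x)|)
    · filter_upwards with γ
      exact (hqm.mul (((hgm.pow measurable_const).sub measurable_const).div_const
        γ)).aestronglyMeasurable
    · have h1 : ∀ᶠ γ : ℝ in nhdsWithin 0 {0}ᶜ, γ ≠ 0 := self_mem_nhdsWithin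
      have h2 : ∀ᶠ γ : ℝ in nhdsWithin 0 {0}ᶜ, |γ| ≤ 1 := nhdsWithin_le_nhds (by
        filter_upwards [Metric.closedBall_mem_nhds (0:ℝ) one_pos] with γ hγ
        simpa [Real.dist_eq] using hγ)
      filter_upwards [h1, h2] with γ hγ0 hγ1
      refine ae_of_all _ fun x => ?_
      rcases eq_or_ne (q x) 0 with h0 | h0
      · simp [h0, abs_nonneg, mul_nonneg hK0.le (abs_nonneg _)]
      · have hg0 : 0 < g x := hcM' x h0
        rw [Real.norm_eq_abs, abs_mul, abs_of_nonneg (hq0 x), abs_div]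
        rw [Real.rpow_def_of_pos hg0]
        have hb : |Real.exp (Real.log (g x) * γ) - 1| ≤ |γ| * (|Real.log (g x)| * K) := by
          calc |Real.exp (Real.log (g x) * γ) - 1|
              ≤ |Real.log (g x) * γ| * Real.exp |Real.log (g x) * γ| :=
                aux_abs_exp_sub_one _
            _ ≤ |Real.log (g x) * γ| * K := by
                apply mul_le_mul_of_nonneg_left _ (abs_nonneg _)
                apply Real.exp_le_exp.mpr
                calc |Real.log (g x) * γ| = |Real.log (g x)| * |γ| := abs_mul _ _
                  _ ≤ max |Real.log c| |Real.log M| * 1 :=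
                      mul_le_mul (hlogb x h0) hγ1 (abs_nonneg _)
                        (le_trans (abs_nonneg _) (hlogb x h0))
                  _ = _ := mul_one _
            _ = |γ| * (|Real.log (g x)| * K) := by rw [abs_mul]; ring
        have hγpos : 0 < |γ| := abs_pos.mpr hγ0
        calc q x * (|Real.exp (Real.log (g x) * γ) - 1| / |γ|)
            ≤ q x * (|γ| * (|Real.log (g x)| * K) / |γ|) := by
              apply mul_le_mul_of_nonneg_left _ (hq0 x)
              gcongr
          _ = K * |q x * Real.log (g x)| := by
              rw [abs_mul, abs_of_nonneg (hq0 x)]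
              field_simp
    · exact (hgl.norm.const_mul K)
    · refine ae_of_all _ fun x => ?_
      rcases eq_or_ne (q x) 0 with h0 | h0
      · simp only [h0, zero_mul]
        exact tendsto_const_nhds
      · have hg0 : 0 < g x := hcM' x h0
        have hd : HasDerivAt (fun γ : ℝ => g x ^ γ) (g x ^ (0:ℝ) * Real.log (g x)) 0 :=
          (Real.hasStrictDerivAt_const_rpow hg0 0).hasDerivAt
        have := hasDerivAt_iff_tendsto_slope.mp hd
        rw [Real.rpow_zero, one_mul] at this
        have hslope : Tendsto (fun γ : ℝ => (g x ^ γ - 1) / γ) (nhdsWithin 0 {0}ᶜ)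
            (nhds (Real.log (g x))) := by
          refine this.congr fun γ => ?_
          rw [slope_def_field]
          simp [Real.rpow_zero]
        exact hslope.const_mul (q x)
  refine hdct.congr' ?_
  have h1 : ∀ᶠ γ : ℝ in nhdsWithin 0 {0}ᶜ, γ ≠ 0 := self_mem_nhdsWithin
  have h2 : ∀ᶠ γ : ℝ in nhdsWithin 0 {0}ᶜ, |γ| ≤ 1 := nhdsWithin_le_nhds (by
    filter_upwards [Metric.closedBall_mem_nhds (0:ℝ) one_pos] with γ hγ
    simpa [Real.dist_eq] using hγ)
  filter_upwards [h1, h2] with γ hγ0 hγ1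
  have heq : (fun x => q x * ((g x ^ γ - 1) / γ)) = fun x => (q x * g x ^ γ - q x) / γ :=
    funext fun x => by ring
  rw [heq, integral_div, integral_sub (hint γ hγ1) hq]


lemma aux_toOne {F : ℝ → ℝ} {L : ℝ}
    (h : Tendsto (fun γ => (F γ - 1) / γ) (nhdsWithin (0:ℝ) {0}ᶜ) (nhds L)) :
    Tendsto F (nhdsWithin (0:ℝ) {0}ᶜ) (nhds 1) := by
  have hγid : Tendsto (fun γ : ℝ => γ) (nhdsWithin (0:ℝ) {0}ᶜ) (nhds 0) :=
    tendsto_id.mono_left nhdsWithin_le_nhds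
  have h2 := (h.mul hγid).add (tendsto_const_nhds (x := (1:ℝ)))
  rw [show L * 0 + 1 = 1 by ring] at h2
  refine h2.congr' ?_
  filter_upwards [self_mem_nhdsWithin] with γ hγ
  have hγ0 : γ ≠ 0 := hγ
  field_simp
  ring

lemma aux_logb {c M g : ℝ} (hc : 0 < c) (h1 : c ≤ g) (h2 : g ≤ M) :
    |Real.log g| ≤ max |Real.log c| |Real.log M| := by
  rw [abs_le]
  constructor
  · calc -(max |Real.log c| |Real.log M|) ≤ -|Real.log c| := by simp [le_max_left]
      _ ≤ Real.log c := neg_abs_le _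
      _ ≤ Real.log g := Real.log_le_log hc h1
  · calc Real.log g ≤ Real.log M := Real.log_le_log (hc.trans_le h1) h2
      _ ≤ |Real.log M| := le_abs_self _
      _ ≤ _ := le_max_right _ _


theorem stmt_3 (d : ℕ) (q p : (Fin d → ℝ) → ℝ)
    (hqm : Measurable q) (hpm : Measurable p)
    (hq0 : ∀ x, 0 ≤ q x) (hp0 : ∀ x, 0 ≤ p x)
    (hq1 : ∫ x, q x = 1) (hp1 : ∫ x, p x = 1)
    (hbdd : ∃ M : ℝ, ∀ x, q x ≤ M ∧ p x ≤ M)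
    (hsupp : ∀ x, q x ≠ 0 ↔ p x ≠ 0)
    (hbelow : ∃ c : ℝ, 0 < c ∧ ∀ x, q x ≠ 0 → c ≤ q x ∧ c ≤ p x)
    (hql : Integrable (fun x => q x * Real.log (q x)))
    (hpl : Integrable (fun x => q x * Real.log (p x))) :
    Tendsto (fun γ : ℝ =>
        (1/γ) * ((-(∫ x, q x * (p x / (∫ y, p y ^ (1 + γ)) ^ (1 / (1 + γ))) ^ γ)) + 1))
      (nhdsWithin 0 {0}ᶜ)
      (nhds (-(∫ x, q x * Real.log (p x)))) ∧
    Tendsto (fun γ : ℝ =>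
        (1/γ) * ((-(∫ x, q x * (p x / (∫ y, p y ^ (1 + γ)) ^ (1 / (1 + γ))) ^ γ))
          + (∫ x, q x ^ (1 + γ)) ^ (1 / (1 + γ))))
      (nhdsWithin 0 {0}ᶜ)
      (nhds (∫ x, q x * Real.log (q x / p x))) := by
  obtain ⟨M₀, hM₀⟩ := hbdd
  obtain ⟨c₀, hc₀pos, hc₀⟩ := hbelow
  set c : ℝ := min c₀ 1 with hc_def
  set M : ℝ := max M₀ 1 with hM_def
  have hc : 0 < c := lt_min hc₀pos one_pos
  have hq_int : Integrable q := by
    by_contra h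
    rw [integral_undef h] at hq1; norm_num at hq1
  have hp_int : Integrable p := by
    by_contra h
    rw [integral_undef h] at hp1; norm_num at hp1
  have hqcM : ∀ x, q x ≠ 0 → c ≤ q x ∧ q x ≤ M := fun x hx =>
    ⟨le_trans (min_le_left _ _) (hc₀ x hx).1, le_trans (hM₀ x).1 (le_max_left _ _)⟩
  have hpcM : ∀ x, q x ≠ 0 → c ≤ p x ∧ p x ≤ M := fun x hx =>
    ⟨le_trans (min_le_left _ _) (hc₀ x hx).2, le_trans (hM₀ x).2 (le_max_left _ _)⟩
  have hppcM : ∀ x, p x ≠ 0 → c ≤ p x ∧ p x ≤ M := fun x hx => hpcM x ((hsupp x).mpr hx)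
  -- integrability of p log p
  have hpl2 : Integrable (fun x => p x * Real.log (p x)) := by
    set C : ℝ := M * max |Real.log c| |Real.log M| / c with hC_def
    have hC0 : 0 ≤ C := by
      apply div_nonneg _ hc.le
      exact mul_nonneg (le_trans hc.le (le_trans (min_le_right _ _) (le_max_right _ _)))
        (le_trans (abs_nonneg _) (le_max_right _ _))
    refine (hq_int.const_mul C).mono
      (hpm.mul (Real.measurable_log.comp hpm)).aestronglyMeasurable (ae_of_all _ fun x => ?_)
    rcases eq_or_ne (q x) 0 with h0 | h0
    · have hpx : p x = 0 := by
        by_contra hc'; exact ((hsupp x).mpr hc') h0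
      simp [hpx, h0, Real.log_zero]
    · obtain ⟨h1, h2⟩ := hppcM x ((hsupp x).mp h0)
      have hlb : |Real.log (p x)| ≤ max |Real.log c| |Real.log M| := aux_logb hc h1 h2
      rw [Real.norm_eq_abs, abs_mul, abs_of_nonneg (hp0 x), Real.norm_eq_abs,
        abs_of_nonneg (mul_nonneg hC0 (hq0 x))]
      have hqc : c ≤ q x := (hqcM x h0).1
      calc p x * |Real.log (p x)| ≤ M * max |Real.log c| |Real.log M| :=
            mul_le_mul h2 hlb (abs_nonneg _) (le_trans (hp0 x) h2)
        _ = C * c := by rw [hC_def]; field_simp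
        _ ≤ C * q x := by gcongr
  obtain ⟨hA_p, hI_p⟩ := aux_A hqm hpm hq0 hc hpcM hq_int hpl
  obtain ⟨hA_q, hI_q⟩ := aux_A hqm hqm hq0 hc hqcM hq_int hql
  obtain ⟨hA_pp, hI_pp⟩ := aux_A hpm hpm hp0 hc hppcM hp_int hpl2
  rw [hq1] at hA_p hA_q
  rw [hp1] at hA_pp
  set l := nhdsWithin (0:ℝ) {0}ᶜ with hl_def
  have hev0 : ∀ᶠ γ : ℝ in l, γ ≠ 0 := self_mem_nhdsWithin
  have hev1 : ∀ᶠ γ : ℝ in l, |γ| < 1/2 := nhdsWithin_le_nhds (by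
    filter_upwards [Metric.ball_mem_nhds (0:ℝ) (by norm_num : (0:ℝ) < 1/2)] with γ hγ
    simpa [Real.dist_eq] using hγ)
  have hγid : Tendsto (fun γ : ℝ => γ) l (nhds 0) := tendsto_id.mono_left nhdsWithin_le_nhds
  have h1γ : Tendsto (fun γ : ℝ => 1 + γ) l (nhds 1) := by
    have := tendsto_const_nhds (x := (1:ℝ)) (f := l) |>.add hγid
    simpa using this
  have hinv1γ : Tendsto (fun γ : ℝ => 1 / (1 + γ)) l (nhds 1) := by
    simpa [one_div] using h1γ.inv₀ one_ne_zero
  set Lp := ∫ x, q x * Real.log (p x) with hLp_def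
  set Lq := ∫ x, q x * Real.log (q x) with hLq_def
  set f : ℝ → ℝ := fun γ => ∫ x, q x * p x ^ γ with hf_def
  have hf1 : Tendsto (fun γ => (f γ - 1) / γ) l (nhds Lp) := hA_p
  have hf : Tendsto f l (nhds 1) := aux_toOne hf1
  -- the normalization integral N
  have hNeq : ∀ᶠ γ : ℝ in l, (∫ x, p x ^ (1 + γ)) = ∫ x, p x * p x ^ γ := by
    filter_upwards [hev0, hev1] with γ hγ0 hγ1
    refine integral_congr_ae (ae_of_all _ fun x => ?_)
    show p x ^ (1 + γ) = p x * p x ^ γ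
    rcases eq_or_ne (p x) 0 with h0 | h0
    · have h1γ0 : (1:ℝ) + γ ≠ 0 := by
        have := abs_lt.mp hγ1; intro h; linarith
      rw [h0, Real.zero_rpow h1γ0, zero_mul]
    · have hp' : 0 < p x := lt_of_le_of_ne (hp0 x) (Ne.symm h0)
      rw [Real.rpow_add hp', Real.rpow_one]
  have hNP : Tendsto (fun γ : ℝ => ∫ x, p x * p x ^ γ) l (nhds 1) := aux_toOne hA_pp
  have hN : Tendsto (fun γ : ℝ => ∫ x, p x ^ (1 + γ)) l (nhds 1) := hNP.congr' (hNeq.mono fun γ h => h.symm)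
  have hNpos : ∀ᶠ γ in l, 0 < (∫ x, p x ^ (1 + γ)) := hN.eventually (eventually_gt_nhds zero_lt_one)
  have hlogN : Tendsto (fun γ : ℝ => Real.log (∫ x, p x ^ (1 + γ))) l (nhds 0) := by
    have h := (Real.continuousAt_log one_ne_zero).tendsto.comp hN
    rw [Real.log_one] at h
    exact h
  set v : ℝ → ℝ := fun γ => Real.log (∫ x, p x ^ (1 + γ)) * (1 / (1 + γ)) * γ with hv_def
  have hvγ : Tendsto (fun γ => Real.log (∫ x, p x ^ (1 + γ)) * (1 / (1 + γ))) l (nhds 0) := by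
    have := hlogN.mul hinv1γ
    simpa using this
  have hv_div : Tendsto (fun γ => v γ / γ) l (nhds 0) := by
    refine hvγ.congr' ?_
    filter_upwards [hev0] with γ hγ0
    simp only [hv_def]
    rw [mul_div_assoc, div_self hγ0, mul_one]
  have hv0 : Tendsto v l (nhds 0) := by
    have h := hvγ.mul hγid
    rw [show (0:ℝ) * 0 = 0 by ring] at h
    exact h
  have hexp : HasDerivAt (fun t : ℝ => Real.exp t - 1) 1 0 := by
    simpa using (Real.hasDerivAt_exp 0).sub_const 1
  have hexp0 : (fun t : ℝ => Real.exp t - 1) 0 = 0 := by simp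
  have hBterm : Tendsto (fun γ => (Real.exp (v γ) - 1) / γ) l (nhds 0) := by
    have h := aux_lemB hexp hexp0 hv0 hv_div
    rw [show (1:ℝ) * 0 = 0 by ring] at h
    exact h
  have hE : Tendsto (fun γ => Real.exp (v γ)) l (nhds 1) := by
    have h := (Real.continuous_exp.tendsto 0).comp hv0
    rw [Real.exp_zero] at h
    exact h
  have first : Tendsto (fun γ => -((f γ - 1) / γ) + (f γ / Real.exp (v γ)) *
      ((Real.exp (v γ) - 1) / γ)) l (nhds (-Lp)) := by
    have h := (hf1.neg).add ((hf.div hE one_ne_zero).mul hBterm)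
    rw [show -Lp + 1 / 1 * 0 = -Lp by norm_num] at h
    exact h
  have hEq1 : ∀ᶠ γ : ℝ in l,
      (1/γ) * ((-(∫ x, q x * (p x / (∫ y, p y ^ (1 + γ)) ^ (1 / (1 + γ))) ^ γ)) + 1)
      = -((f γ - 1) / γ) + (f γ / Real.exp (v γ)) * ((Real.exp (v γ) - 1) / γ) := by
    filter_upwards [hev0, hev1, hNpos] with γ hγ0 hγ1 hNp
    have hA : (0:ℝ) < (∫ y, p y ^ (1 + γ)) ^ (1 / (1 + γ)) := Real.rpow_pos_of_pos hNp _
    have hAg : ((∫ y, p y ^ (1 + γ)) ^ (1 / (1 + γ)) : ℝ) ^ γ = Real.exp (v γ) := by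
      rw [Real.rpow_def_of_pos hA, Real.rpow_def_of_pos hNp, Real.log_exp, hv_def]
    have hint_eq : (∫ x, q x * (p x / (∫ y, p y ^ (1 + γ)) ^ (1 / (1 + γ))) ^ γ)
        = f γ / Real.exp (v γ) := by
      have hpt : ∀ x, q x * (p x / (∫ y, p y ^ (1 + γ)) ^ (1 / (1 + γ))) ^ γ
          = (q x * p x ^ γ) / Real.exp (v γ) := fun x => by
        rw [Real.div_rpow (hp0 x) hA.le, hAg, mul_div_assoc]
      rw [integral_congr_ae (ae_of_all _ hpt), integral_div]
    rw [hint_eq]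
    have hEne : Real.exp (v γ) ≠ 0 := (Real.exp_pos _).ne'
    field_simp
    ring
  have goal1 : Tendsto (fun γ : ℝ =>
      (1/γ) * ((-(∫ x, q x * (p x / (∫ y, p y ^ (1 + γ)) ^ (1 / (1 + γ))) ^ γ)) + 1))
      l (nhds (-Lp)) := Tendsto.congr' (hEq1.mono fun γ h => h.symm) first
  -- second part
  have hGqeq : ∀ᶠ γ : ℝ in l, (∫ x, q x ^ (1 + γ)) = ∫ x, q x * q x ^ γ := by
    filter_upwards [hev0, hev1] with γ hγ0 hγ1
    refine integral_congr_ae (ae_of_all _ fun x => ?_)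
    show q x ^ (1 + γ) = q x * q x ^ γ
    rcases eq_or_ne (q x) 0 with h0 | h0
    · have h1γ0 : (1:ℝ) + γ ≠ 0 := by
        have := abs_lt.mp hγ1; intro h; linarith
      rw [h0, Real.zero_rpow h1γ0, zero_mul]
    · have hq' : 0 < q x := lt_of_le_of_ne (hq0 x) (Ne.symm h0)
      rw [Real.rpow_add hq', Real.rpow_one]
  have hGq1 : Tendsto (fun γ : ℝ => ((∫ x, q x ^ (1 + γ)) - 1) / γ) l (nhds Lq) := by
    refine hA_q.congr' ?_
    filter_upwards [hGqeq] with γ h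
    rw [h]
  have hGq : Tendsto (fun γ : ℝ => ∫ x, q x ^ (1 + γ)) l (nhds 1) := aux_toOne hGq1
  have hGqpos : ∀ᶠ γ in l, 0 < ∫ x, q x ^ (1 + γ) := hGq.eventually (eventually_gt_nhds zero_lt_one)
  have hlog1 : HasDerivAt (fun t : ℝ => Real.log (1 + t)) 1 0 := by
    have h := ((hasDerivAt_id (0:ℝ)).const_add 1).log (by norm_num)
    simpa using h
  have hlogGq : Tendsto (fun γ : ℝ => Real.log (∫ x, q x ^ (1 + γ)) / γ) l (nhds Lq) := by
    have hh : Tendsto (fun γ : ℝ => (∫ x, q x ^ (1 + γ)) - 1) l (nhds 0) := by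
      have := hGq.sub_const 1
      simpa using this
    have h := aux_lemB hlog1 (by simp) hh hGq1
    rw [one_mul] at h
    refine h.congr fun γ => ?_
    rw [show (1:ℝ) + ((∫ x, q x ^ (1 + γ)) - 1) = ∫ x, q x ^ (1 + γ) by ring]
  set w : ℝ → ℝ := fun γ => Real.log (∫ x, q x ^ (1 + γ)) * (1 / (1 + γ)) with hw_def
  have hw_div : Tendsto (fun γ => w γ / γ) l (nhds Lq) := by
    have h := hlogGq.mul hinv1γ
    rw [mul_one] at h
    refine h.congr fun γ => ?_
    rw [hw_def]
    ring
  have hw0 : Tendsto w l (nhds 0) := by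
    have hlg : Tendsto (fun γ : ℝ => Real.log (∫ x, q x ^ (1 + γ))) l (nhds 0) := by
      have h := (Real.continuousAt_log one_ne_zero).tendsto.comp hGq
      rw [Real.log_one] at h
      exact h
    have h := hlg.mul hinv1γ
    rw [show (0:ℝ) * 1 = 0 by ring] at h
    exact h
  have hMq : Tendsto (fun γ => (Real.exp (w γ) - 1) / γ) l (nhds Lq) := by
    have h := aux_lemB hexp hexp0 hw0 hw_div
    rw [one_mul] at h
    exact h
  have hMq_eq : ∀ᶠ γ : ℝ in l, (∫ x, q x ^ (1 + γ)) ^ (1 / (1 + γ)) = Real.exp (w γ) := by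
    filter_upwards [hGqpos] with γ h
    rw [Real.rpow_def_of_pos h, hw_def]
  have htarget : (∫ x, q x * Real.log (q x / p x)) = -Lp + Lq := by
    have hpt : (fun x => q x * Real.log (q x / p x))
        = fun x => q x * Real.log (q x) - q x * Real.log (p x) := by
      funext x
      rcases eq_or_ne (q x) 0 with h0 | h0
      · simp [h0]
      · have hpx : p x ≠ 0 := (hsupp x).mp h0
        rw [Real.log_div h0 hpx]; ring
    rw [hpt, integral_sub hql hpl, ← hLq_def, ← hLp_def]
    ring
  refine ⟨goal1, ?_⟩
  rw [htarget]
  have goal2 := goal1.add hMq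
  refine Tendsto.congr' ?_ goal2
  filter_upwards [hMq_eq] with γ hMqe
  rw [hMqe]
  ring
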